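/- Let ((V,E), f) be a signal over a finite connected graph and 𝔗 a BHT of it. Let V_ε = {v₁, …, v_m} be the set of vertices v with pers(v) = f(𝔏(v)) − f(v) < ε. For a function g : V → ℝ and v ∈ V, define g_v(u) = g(𝔏(v)) if v ⪯_T u, and g_v(u) = g(u) otherwise. Then the low persistence filter satisfies 𝓛₀^ε f = (⋯((f_{v₁})_{v₂})⋯)_{v_m}, and this composite is independent of the order in which the vertices of V_ε are processed. -/

import Mathlib

open scoped Classical

/-- A (multi)graph given by source and target maps on an edge type. -/
structure SigGraph (V E : Type*) where
  src : E → V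
  tgt : E → V

namespace SigGraph

variable {V E : Type*} (G : SigGraph V E)

/-- `e` is an edge joining `x` and `y`. -/
def Ends (e : E) (x y : V) : Prop :=
  (G.src e = x ∧ G.tgt e = y) ∨ (G.src e = y ∧ G.tgt e = x)

/-- The graph is connected. -/
def Connected : Prop :=
  ∀ a b : V, Relation.ReflTransGen (fun x y => ∃ e, G.Ends e x y) a b

/-- Extension of a vertex signal to vertices and edges, `f(e) = max f(V(e))`. -/
def sig (f : V → ℝ) : V ⊕ E → ℝ
  | .inl v => f v
  | .inr e => max (f (G.src e)) (f (G.tgt e))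

/-- `pos` realizes a `G`-ordering: a total ordering of `V ⊕ E` along which the
signal is nondecreasing and every vertex precedes each edge incident to it. -/
def IsGOrdering (f : V → ℝ) (pos : V ⊕ E → ℕ) : Prop :=
  Function.Injective pos ∧
  (∀ a b, pos a ≤ pos b → G.sig f a ≤ G.sig f b) ∧
  (∀ e : E, pos (.inl (G.src e)) < pos (.inr e) ∧ pos (.inl (G.tgt e)) < pos (.inr e))

/-- Connectivity within the subgraph `G_{<k}` of elements with position `< k`. -/
def ConnB (pos : V ⊕ E → ℕ) (k : ℕ) (a b : V) : Prop :=
  pos (.inl a) < k ∧ pos (.inl b) < k ∧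
    Relation.ReflTransGen (fun x y => ∃ e, pos (.inr e) < k ∧ G.Ends e x y) a b

/-- `m` is the `≺`-minimum of the connected component of `v` in `G_{<k}`. -/
def IsCompMin (pos : V ⊕ E → ℕ) (k : ℕ) (m v : V) : Prop :=
  G.ConnB pos k m v ∧ ∀ w, G.ConnB pos k v w → pos (.inl m) ≤ pos (.inl w)

/-- The `≺`-maximal endpoint of an edge. -/
def maxEnd (pos : V ⊕ E → ℕ) (e : E) : V :=
  if pos (.inl (G.src e)) ≤ pos (.inl (G.tgt e)) then G.tgt e else G.src e

/-- `(p, L)` is a basin hierarchy tree of the signal `(G, f)` with respect to the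
`G`-ordering `pos`, rooted at the `≺`-minimal vertex `r`, with linking-vertex map `L`. -/
structure IsBHT (f : V → ℝ) (pos : V ⊕ E → ℕ) (r : V) (p : V → V) (L : V → V) : Prop where
  ordering : G.IsGOrdering f pos
  root_min : ∀ v, pos (.inl r) ≤ pos (.inl v)
  root_fix : p r = r
  reaches : ∀ v, ∃ n, p^[n] v = r
  spec : ∀ v, v ≠ r → ∃ e : E,
    G.IsCompMin pos (pos (.inr e)) v v ∧
    G.IsCompMin pos (pos (.inr e) + 1) (p v) v ∧
    L v = G.maxEnd pos e

end SigGraph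

/-- `u` is an ancestor of `v` in the tree with parent map `p` (`u ⪯_T v`). -/
def Anc {V : Type*} (p : V → V) (u v : V) : Prop := ∃ n, p^[n] v = u

/-- `f(𝔏(v))`, with value `+∞` at the root. -/
noncomputable def fLink {V : Type*} (f : V → ℝ) (r : V) (L : V → V) (v : V) : EReal :=
  if v = r then ⊤ else (f (L v) : EReal)

/-- The persistence `pers(v) = f(𝔏(v)) - f(v)` of a vertex in a BHT. -/
noncomputable def persBHT {V : Type*} (f : V → ℝ) (r : V) (L : V → V) (v : V) : EReal :=
  fLink f r L v - (f v : EReal)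

namespace SigGraph

variable {V E : Type*} (G : SigGraph V E)

/-- The component of `v` dies at the edge `e`: `v` is the minimum of its component
just before `e` is added, and no longer after. -/
def DiesAt (pos : V ⊕ E → ℕ) (v : V) (e : E) : Prop :=
  G.IsCompMin pos (pos (.inr e)) v v ∧ ¬ G.IsCompMin pos (pos (.inr e) + 1) v v

/-- The death value of the component created by `v` (`+∞` if permanent). -/
noncomputable def deathVal (f : V → ℝ) (pos : V ⊕ E → ℕ) (v : V) : EReal :=
  if h : ∃ e, G.DiesAt pos v e then ((G.sig f (.inr h.choose) : ℝ) : EReal) else ⊤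

/-- The degree-0 persistence diagram of `(G, f)`, as a multiset of intervals
`[birth, death)` (including trivial intervals). -/
noncomputable def PD0 [Fintype V] (f : V → ℝ) (pos : V ⊕ E → ℕ) : Multiset (EReal × EReal) :=
  Finset.univ.val.map fun v : V => ((f v : EReal), G.deathVal f pos v)

end SigGraph

/-- The nontrivial part of a multiset of intervals. -/
noncomputable def nontriv (M : Multiset (EReal × EReal)) : Multiset (EReal × EReal) :=
  M.filter fun ab => ab.1 < ab.2

/-- The 0-low-persistence filter associated to a BHT `(p, L)` rooted at `r`. -/
noncomputable def LPF {V : Type*} [Fintype V] (f : V → ℝ) (r : V) (p L : V → V)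
    (ε : ℝ) (v : V) : ℝ :=
  (insert (f v) ((Finset.univ.filter fun u => Anc p u v ∧ persBHT f r L u < (ε : EReal)).image
    fun u => f (L u))).max' (Finset.insert_nonempty _ _)

/-- The basin-filling operation `g ↦ g_v`: all descendants of `v` in the BHT are
raised to the value `g(𝔏(v))`. -/
noncomputable def fill {V : Type*} (p L : V → V) (g : V → ℝ) (v : V) : V → ℝ :=
  fun u => if Anc p v u then g (L v) else g u

section Aux

open Relation Finset

variable {V E : Type*} {G : SigGraph V E} {f : V → ℝ} {pos : V ⊕ E → ℕ} {r : V} {p L : V → V}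

lemma max'_congr' {α : Type*} [LinearOrder α] {s t : Finset α} (h : s = t) (hs : s.Nonempty)
    (ht : t.Nonempty) : s.max' hs = t.max' ht := by subst h; rfl

/-! ### Basic lemmas about `Anc` -/

lemma anc_refl (p : V → V) (v : V) : Anc p v v := ⟨0, rfl⟩

lemma anc_trans {a b c : V} (h1 : Anc p a b) (h2 : Anc p b c) : Anc p a c := by
  obtain ⟨n, hn⟩ := h1; obtain ⟨m, hm⟩ := h2
  exact ⟨n + m, by rw [Function.iterate_add_apply, hm, hn]⟩

lemma anc_step (p : V → V) (v : V) : Anc p (p v) v := ⟨1, rfl⟩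

lemma anc_p_of_ne {w v : V} (h : Anc p w v) (hne : w ≠ v) : Anc p w (p v) := by
  obtain ⟨n, hn⟩ := h
  cases n with
  | zero => simp at hn; exact absurd hn.symm hne
  | succ k => exact ⟨k, by rw [← Function.iterate_succ_apply]; exact hn⟩

lemma anc_comparable {a b x : V} (h1 : Anc p a x) (h2 : Anc p b x) :
    Anc p a b ∨ Anc p b a := by
  obtain ⟨n, hn⟩ := h1; obtain ⟨m, hm⟩ := h2
  rcases le_total n m with h | h
  · right
    exact ⟨m - n, by rw [← hn, ← Function.iterate_add_apply, Nat.sub_add_cancel h]; exact hm⟩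
  · left
    exact ⟨n - m, by rw [← hm, ← Function.iterate_add_apply, Nat.sub_add_cancel h]; exact hn⟩

/-! ### Basic lemmas about `ConnB` and `IsCompMin` -/

lemma connB_symm {k : ℕ} {a b : V} (h : G.ConnB pos k a b) : G.ConnB pos k b a := by
  refine ⟨h.2.1, h.1, ?_⟩
  have hs : Symmetric (fun x y : V => ∃ e, pos (.inr e) < k ∧ G.Ends e x y) := by
    rintro x y ⟨e, he, hxy⟩
    exact ⟨e, he, Or.symm hxy⟩
  exact @Std.Symm.symm _ _ (@Relation.ReflTransGen.stdSymm _ _ ⟨fun _ _ hh => hs hh⟩) _ _ h.2.2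

lemma connB_trans {k : ℕ} {a b c : V} (h1 : G.ConnB pos k a b) (h2 : G.ConnB pos k b c) :
    G.ConnB pos k a c :=
  ⟨h1.1, h2.2.1, h1.2.2.trans h2.2.2⟩

lemma connB_mono {k k' : ℕ} (hk : k ≤ k') {a b : V} (h : G.ConnB pos k a b) :
    G.ConnB pos k' a b := by
  refine ⟨lt_of_lt_of_le h.1 hk, lt_of_lt_of_le h.2.1 hk, Relation.ReflTransGen.mono ?_ _ _ h.2.2⟩
  rintro x y ⟨e, he, hxy⟩
  exact ⟨e, lt_of_lt_of_le he hk, hxy⟩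

lemma connB_self {k : ℕ} {a : V} (h : pos (.inl a) < k) : G.ConnB pos k a a :=
  ⟨h, h, .refl⟩

lemma compmin_unique {k : ℕ} {m m' x : V} (hpos : Function.Injective pos)
    (h1 : G.IsCompMin pos k m x) (h2 : G.IsCompMin pos k m' x) : m = m' := by
  have a1 : pos (.inl m) ≤ pos (.inl m') := h1.2 m' (connB_symm h2.1)
  have a2 : pos (.inl m') ≤ pos (.inl m) := h2.2 m (connB_symm h1.1)
  have := hpos (le_antisymm a1 a2)
  exact Sum.inl.inj this

lemma compmin_transfer {k : ℕ} {m x y : V} (h : G.IsCompMin pos k m x)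
    (hxy : G.ConnB pos k x y) : G.IsCompMin pos k m y :=
  ⟨connB_trans h.1 hxy, fun w hw => h.2 w (connB_trans hxy hw)⟩

lemma compmin_self {k : ℕ} {m x : V} (h : G.IsCompMin pos k m x) : G.IsCompMin pos k m m :=
  ⟨connB_self h.1.1, fun w hw => h.2 w (connB_trans (connB_symm h.1) hw)⟩

/-! ### Lemmas depending on the BHT -/

variable (hbht : G.IsBHT f pos r p L)

/-- The death time of `v` (junk value `0` at the root). -/
noncomputable def dt (hbht : G.IsBHT f pos r p L) (v : V) : ℕ :=
  if h : v = r then 0 else pos (.inr (hbht.spec v h).choose)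

include hbht

lemma r_alive {k : ℕ} (h : pos (.inl r) < k) : G.IsCompMin pos k r r :=
  ⟨connB_self h, fun w _ => hbht.root_min w⟩

lemma iterate_r (n : ℕ) : p^[n] r = r := Function.iterate_fixed hbht.root_fix n

lemma p_ne {v : V} (hv : v ≠ r) : p v ≠ v := by
  intro h
  obtain ⟨n, hn⟩ := hbht.reaches v
  rw [Function.iterate_fixed h n] at hn
  exact hv hn

lemma ne_r_of_anc {v u : V} (h : Anc p v u) (hv : v ≠ r) : u ≠ r := by
  rintro rfl
  obtain ⟨n, hn⟩ := h
  rw [iterate_r hbht n] at hn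
  exact hv hn.symm

lemma dt_spec {v : V} (hv : v ≠ r) : ∃ e : E, pos (.inr e) = dt hbht v ∧
    G.IsCompMin pos (dt hbht v) v v ∧ G.IsCompMin pos (dt hbht v + 1) (p v) v ∧
    L v = G.maxEnd pos e := by
  have h := (hbht.spec v hv).choose_spec
  refine ⟨(hbht.spec v hv).choose, ?_, ?_, ?_, h.2.2⟩ <;>
    simp only [dt, dif_neg hv]
  · exact h.1
  · exact h.2.1

lemma dt_pos_lt {v : V} (hv : v ≠ r) : pos (.inl v) < dt hbht v :=
  (dt_spec hbht hv).choose_spec.2.1.1.1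

lemma pos_p_le (v : V) : pos (.inl (p v)) ≤ pos (.inl v) := by
  by_cases hv : v = r
  · subst hv; rw [hbht.root_fix]
  · obtain ⟨e, hpe, h1, h2, hL⟩ := dt_spec hbht hv
    exact h2.2 v (connB_self (lt_of_lt_of_le (dt_pos_lt hbht hv) (Nat.le_succ _)))

lemma pos_p_lt {v : V} (hv : v ≠ r) : pos (.inl (p v)) < pos (.inl v) :=
  lt_of_le_of_ne (pos_p_le hbht v) fun h =>
    p_ne hbht hv (Sum.inl.inj (hbht.ordering.1 h))

lemma pos_iter (n : ℕ) (x : V) : pos (.inl (p^[n] x)) ≤ pos (.inl x) := by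
  induction n generalizing x with
  | zero => simp
  | succ n ih =>
    rw [Function.iterate_succ_apply]
    exact (ih (p x)).trans (pos_p_le hbht x)

lemma pos_anc {a x : V} (h : Anc p a x) : pos (.inl a) ≤ pos (.inl x) := by
  obtain ⟨n, hn⟩ := h
  rw [← hn]
  exact pos_iter hbht n x

/-! ### Alive/dead characterization -/

omit hbht in
lemma compmin_down {k K : ℕ} {x : V} (hk : k ≤ K) (hp : pos (.inl x) < k)
    (h : G.IsCompMin pos K x x) : G.IsCompMin pos k x x :=
  ⟨connB_self hp, fun w hw => h.2 w (connB_mono hk hw)⟩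

lemma dead {v : V} (hv : v ≠ r) : ¬ G.IsCompMin pos (dt hbht v + 1) v v := by
  intro hx
  obtain ⟨e, hpe, h1, h2, hL⟩ := dt_spec hbht hv
  exact p_ne hbht hv (compmin_unique hbht.ordering.1 h2 ⟨hx.1, hx.2⟩)

lemma alive_le {v : V} {k : ℕ} (hv : v ≠ r) (h : G.IsCompMin pos k v v) : k ≤ dt hbht v := by
  by_contra hk
  push_neg at hk
  exact dead hbht hv (compmin_down (by omega) (lt_of_lt_of_le (dt_pos_lt hbht hv) (Nat.le_succ _)) h)

lemma alive_of_le {v : V} {k : ℕ} (hv : v ≠ r) (h1 : pos (.inl v) < k) (h2 : k ≤ dt hbht v) :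
    G.IsCompMin pos k v v :=
  compmin_down h2 h1 (dt_spec hbht hv).choose_spec.2.1

lemma dt_lt_parent {v : V} (hv : v ≠ r) (hpv : p v ≠ r) : dt hbht v < dt hbht (p v) := by
  obtain ⟨e, hpe, h1, h2, hL⟩ := dt_spec hbht hv
  exact alive_le hbht hpv (compmin_self h2)

lemma dt_anc_le {v u : V} (h : Anc p v u) (hv : v ≠ r) : dt hbht u ≤ dt hbht v := by
  obtain ⟨n, hn⟩ := h
  induction n generalizing u with
  | zero => simp at hn; subst hn; exact le_refl _
  | succ n ih =>
    rw [Function.iterate_succ_apply] at hn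
    have hu : u ≠ r := ne_r_of_anc hbht ⟨n + 1, by rw [Function.iterate_succ_apply]; exact hn⟩ hv
    have hpu : p u ≠ r := ne_r_of_anc hbht ⟨n, hn⟩ hv
    exact le_trans (le_of_lt (dt_lt_parent hbht hu hpu)) (ih hn)

/-! ### Values of the linking map -/

lemma sig_maxEnd (e : E) : f (G.maxEnd pos e) = G.sig f (.inr e) := by
  unfold SigGraph.maxEnd
  by_cases h : pos (.inl (G.src e)) ≤ pos (.inl (G.tgt e))
  · rw [if_pos h]
    have := hbht.ordering.2.1 _ _ h
    exact (max_eq_right this).symm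
  · rw [if_neg h]
    have := hbht.ordering.2.1 _ _ (le_of_not_ge h)
    exact (max_eq_left this).symm

lemma pos_maxEnd_lt (e : E) : pos (.inl (G.maxEnd pos e)) < pos (.inr e) := by
  unfold SigGraph.maxEnd
  by_cases h : pos (.inl (G.src e)) ≤ pos (.inl (G.tgt e))
  · rw [if_pos h]; exact (hbht.ordering.2.2 e).2
  · rw [if_neg h]; exact (hbht.ordering.2.2 e).1

lemma pos_L_lt {v : V} (hv : v ≠ r) : pos (.inl (L v)) < dt hbht v := by
  obtain ⟨e, hpe, h1, h2, hL⟩ := dt_spec hbht hv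
  rw [hL, ← hpe]
  exact pos_maxEnd_lt hbht e

lemma f_le_fL {v : V} (hv : v ≠ r) : f v ≤ f (L v) := by
  obtain ⟨e, hpe, h1, h2, hL⟩ := dt_spec hbht hv
  rw [hL, sig_maxEnd hbht]
  have : pos (.inl v) ≤ pos (.inr e) := le_of_lt (by rw [hpe]; exact dt_pos_lt hbht hv)
  exact hbht.ordering.2.1 _ _ this

lemma fL_mono {w v : V} (hw : w ≠ r) (hv : v ≠ r) (h : dt hbht w ≤ dt hbht v) :
    f (L w) ≤ f (L v) := by
  obtain ⟨e, hpe, h1, h2, hL⟩ := dt_spec hbht hw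
  obtain ⟨e', hpe', h1', h2', hL'⟩ := dt_spec hbht hv
  rw [hL, hL', sig_maxEnd hbht, sig_maxEnd hbht]
  exact hbht.ordering.2.1 _ _ (by rw [hpe, hpe']; exact h)

lemma f_le_fL_anc {v u : V} (h : Anc p v u) (hv : v ≠ r) : f u ≤ f (L v) := by
  have hu := ne_r_of_anc hbht h hv
  exact (f_le_fL hbht hu).trans (fL_mono hbht hu hv (dt_anc_le hbht h hv))

/-! ### The main structural lemma -/

lemma main_lemma : ∀ n (x : V), pos (.inl x) < n → ∀ k m, G.IsCompMin pos k m x →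
    Anc p m x ∧ ∀ w, Anc p w x → G.IsCompMin pos k w w → Anc p w m := by
  intro n
  induction n with
  | zero => intro x hx; omega
  | succ n ih =>
    intro x hx k m hm
    by_cases halive : G.IsCompMin pos k x x
    · obtain rfl := compmin_unique hbht.ordering.1 hm halive
      exact ⟨anc_refl p m, fun w hw _ => hw⟩
    · have hxr : x ≠ r := by
        rintro rfl
        exact halive (r_alive hbht hm.1.2.1)
      have hdt : dt hbht x < k := by
        by_contra hk
        push_neg at hk
        exact halive (alive_of_le hbht hxr hm.1.2.1 hk)
      obtain ⟨e, hpe, h1, h2, hL⟩ := dt_spec hbht hxr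
      have hcon : G.ConnB pos k (p x) x := connB_mono (by omega) h2.1
      have hm' : G.IsCompMin pos k m (p x) :=
        ⟨connB_trans hm.1 (connB_symm hcon), fun w hw => hm.2 w (connB_trans (connB_symm hcon) hw)⟩
      have hppos : pos (.inl (p x)) < n :=
        lt_of_lt_of_le (pos_p_lt hbht hxr) (Nat.lt_succ_iff.mp hx)
      obtain ⟨ha, hw⟩ := ih (p x) hppos k m hm'
      refine ⟨anc_trans ha (anc_step p x), fun w hwx hwa => ?_⟩
      have hwnex : w ≠ x := by rintro rfl; exact halive hwa
      exact hw w (anc_p_of_ne hwx hwnex) hwa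

lemma compmin_anc {x : V} {k : ℕ} {m : V} (hm : G.IsCompMin pos k m x) : Anc p m x :=
  (main_lemma hbht (pos (.inl x) + 1) x (Nat.lt_succ_self _) k m hm).1

lemma compmin_alive_anc {x : V} {k : ℕ} {m w : V} (hm : G.IsCompMin pos k m x)
    (hw : Anc p w x) (hwa : G.IsCompMin pos k w w) : Anc p w m :=
  (main_lemma hbht (pos (.inl x) + 1) x (Nat.lt_succ_self _) k m hm).2 w hw hwa

/-! ### The linking vertex is in the basin of the parent -/

lemma path_split (e : E) {k : ℕ} (hk : pos (.inr e) = k) {a b : V}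
    (h : Relation.ReflTransGen (fun x y => ∃ e', pos (.inr e') < k + 1 ∧ G.Ends e' x y) a b) :
    Relation.ReflTransGen (fun x y => ∃ e', pos (.inr e') < k ∧ G.Ends e' x y) a b ∨
    Relation.ReflTransGen (fun x y => ∃ e', pos (.inr e') < k + 1 ∧ G.Ends e' x y) a (G.src e) := by
  induction h with
  | refl => exact Or.inl .refl
  | @tail b c hab hstep ih =>
    obtain ⟨e', he', hends⟩ := hstep
    by_cases hee : e' = e
    · subst hee
      rcases ih with ih | ih
      · have hab' : Relation.ReflTransGen
            (fun x y => ∃ e'', pos (.inr e'') < k + 1 ∧ G.Ends e'' x y) a b := by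
          refine Relation.ReflTransGen.mono ?_ _ _ ih
          rintro x y ⟨e'', h1, h2⟩
          exact ⟨e'', by omega, h2⟩
        rcases hends with ⟨h1, h2⟩ | ⟨h1, h2⟩
        · right; rw [h1]; exact hab'
        · right
          exact hab'.tail ⟨e', by omega, Or.inr ⟨rfl, h2⟩⟩
      · exact Or.inr ih
    · have hlt : pos (.inr e') < k := by
        have hne : pos (.inr e') ≠ k := by
          rw [← hk]
          intro hh
          exact hee (Sum.inr.inj (hbht.ordering.1 hh))
        omega
      rcases ih with ih | ih
      · exact Or.inl (ih.tail ⟨e', hlt, hends⟩)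
      · exact Or.inr ih

lemma compmin_Lv {v : V} (hv : v ≠ r) :
    G.IsCompMin pos (dt hbht v + 1) (p v) (L v) := by
  obtain ⟨e, hpe, h1, h2, hL⟩ := dt_spec hbht hv
  have hLpos : pos (.inl (L v)) < dt hbht v := pos_L_lt hbht hv
  have hvpos : pos (.inl v) < dt hbht v := dt_pos_lt hbht hv
  have hconn : G.ConnB pos (dt hbht v + 1) v (L v) := by
    by_contra hnc
    apply dead hbht hv
    refine ⟨connB_self (by omega), ?_⟩
    intro w hw
    rcases path_split hbht e hpe hw.2.2 with hs | hs
    · have hwpos : pos (.inl w) < dt hbht v := by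
        have : pos (.inl w) ≠ dt hbht v := by
          rw [← hpe]
          intro hh
          exact absurd (hbht.ordering.1 hh) (by simp)
        have := hw.2.1
        omega
      exact h1.2 w ⟨hvpos, hwpos, hs⟩
    · exfalso
      apply hnc
      have htgt : Relation.ReflTransGen
          (fun x y => ∃ e', pos (.inr e') < dt hbht v + 1 ∧ G.Ends e' x y) v (G.tgt e) :=
        hs.tail ⟨e, by omega, Or.inl ⟨rfl, rfl⟩⟩
      refine ⟨by omega, by omega, ?_⟩
      rw [hL]
      unfold SigGraph.maxEnd
      by_cases hme : pos (.inl (G.src e)) ≤ pos (.inl (G.tgt e))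
      · rw [if_pos hme]; exact htgt
      · rw [if_neg hme]; exact hs
  exact compmin_transfer h2 hconn

lemma anc_pv_Lv {v : V} (hv : v ≠ r) : Anc p (p v) (L v) :=
  compmin_anc hbht (compmin_Lv hbht hv)

/-! ### The fold computation -/

/-- The max of `f u` and `f (L w)` over ancestors `w ∈ T` of `u`. -/
noncomputable def MM (f : V → ℝ) (p L : V → V) (T : Finset V) (u : V) : ℝ :=
  (insert (f u) ((T.filter fun w => Anc p w u).image fun w => f (L w))).max'
    (Finset.insert_nonempty _ _)

lemma fill_step (T : Finset V) (hT : ∀ w ∈ T, w ≠ r) {v : V} (hv : v ≠ r) :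
    fill p L (MM f p L T) v = MM f p L (insert v T) := by
  funext u
  unfold fill
  by_cases h : Anc p v u
  · rw [if_pos h]
    unfold MM
    have hmemLv : f (L v) ∈ insert (f u)
        (((insert v T).filter fun w => Anc p w u).image fun w => f (L w)) :=
      Finset.mem_insert_of_mem (Finset.mem_image_of_mem _
        (Finset.mem_filter.mpr ⟨Finset.mem_insert_self _ _, h⟩))
    have hbase : f (L v) ∈ insert (f (L v))
        ((T.filter fun w => Anc p w (L v)).image fun w => f (L w)) :=
      Finset.mem_insert_self _ _
    apply le_antisymm
    · apply Finset.max'_le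
      intro b hb
      rw [Finset.mem_insert] at hb
      rcases hb with rfl | hb
      · exact Finset.le_max' _ _ hmemLv
      · obtain ⟨w, hwmem, rfl⟩ := Finset.mem_image.mp hb
        obtain ⟨hwT, hwanc⟩ := Finset.mem_filter.mp hwmem
        have hwr := hT w hwT
        by_cases hdt : dt hbht w ≤ dt hbht v
        · exact (fL_mono hbht hwr hv hdt).trans (Finset.le_max' _ _ hmemLv)
        · push_neg at hdt
          have hwpos : pos (.inl w) < dt hbht v + 1 :=
            lt_of_le_of_lt (pos_anc hbht hwanc) (by have := pos_L_lt hbht hv; omega)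
          have hwalive : G.IsCompMin pos (dt hbht v + 1) w w :=
            alive_of_le hbht hwr hwpos hdt
          have hwpv : Anc p w (p v) :=
            compmin_alive_anc hbht (compmin_Lv hbht hv) hwanc hwalive
          have hwu : Anc p w u := anc_trans (anc_trans hwpv (anc_step p v)) h
          refine Finset.le_max' _ _ ?_
          refine Finset.mem_insert_of_mem (Finset.mem_image_of_mem _ ?_)
          exact Finset.mem_filter.mpr ⟨Finset.mem_insert_of_mem hwT, hwu⟩
    · apply Finset.max'_le
      intro b hb
      rw [Finset.mem_insert] at hb
      rcases hb with rfl | hb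
      · exact (f_le_fL_anc hbht h hv).trans (Finset.le_max' _ _ hbase)
      · obtain ⟨w, hwmem, rfl⟩ := Finset.mem_image.mp hb
        obtain ⟨hwT', hwanc⟩ := Finset.mem_filter.mp hwmem
        rcases Finset.mem_insert.mp hwT' with rfl | hwT
        · exact Finset.le_max' _ _ hbase
        · have hwr := hT w hwT
          rcases anc_comparable hwanc h with hwv | hvw
          · by_cases hwv' : w = v
            · subst hwv'; exact Finset.le_max' _ _ hbase
            · have hwLv : Anc p w (L v) :=
                anc_trans (anc_p_of_ne hwv hwv') (anc_pv_Lv hbht hv)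
              refine Finset.le_max' _ _ ?_
              refine Finset.mem_insert_of_mem (Finset.mem_image_of_mem _ ?_)
              exact Finset.mem_filter.mpr ⟨hwT, hwLv⟩
          · exact (fL_mono hbht hwr hv (dt_anc_le hbht hvw hv)).trans
              (Finset.le_max' _ _ hbase)
  · rw [if_neg h]
    unfold MM
    exact max'_congr' (by rw [Finset.filter_insert, if_neg h]) _ _

lemma fold_fill : ∀ (l : List V) (T : Finset V), (∀ w ∈ l, w ≠ r) → (∀ w ∈ T, w ≠ r) →
    l.foldl (fill p L) (MM f p L T) = MM f p L (T ∪ l.toFinset) := by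
  intro l
  induction l with
  | nil => intro T _ _; simp
  | cons v l ih =>
    intro T hl hT
    simp only [List.foldl_cons]
    rw [fill_step hbht T hT (hl v (List.mem_cons_self))]
    rw [ih (insert v T) (fun w hw => hl w (List.mem_cons_of_mem _ hw))
      (fun w hw => (Finset.mem_insert.mp hw).elim
        (fun hh => hh ▸ hl v (List.mem_cons_self)) (hT w))]
    rw [List.toFinset_cons, Finset.insert_union, Finset.union_insert]

end Aux
/-- The low-persistence filter is the composite of the basin-filling operations
over the vertices of persistence `< ε`, in any order: for every enumeration `l`
of `V_ε = {v : pers(v) < ε}`, folding the filling operations along `l` starting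
from `f` yields `𝓛₀^ε f`. -/
theorem lpf_eq_fold_fill {V E : Type*} [Fintype V] [Fintype E]
    (G : SigGraph V E) (hG : G.Connected) (f : V → ℝ) (pos : V ⊕ E → ℕ)
    (r : V) (p L : V → V) (hbht : G.IsBHT f pos r p L)
    (ε : ℝ) (hε : 0 < ε)
    (l : List V) (hnd : l.Nodup)
    (hmem : ∀ u : V, u ∈ l ↔ persBHT f r L u < (ε : EReal)) :
    l.foldl (fill p L) f = LPF f r p L ε := by
  classical
  have hr : ∀ w ∈ l, w ≠ r := by
    intro w hw hwr
    have h := (hmem w).mp hw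
    subst hwr
    simp only [persBHT, fLink, if_pos rfl, EReal.top_sub_coe] at h
    exact not_top_lt h
  have hf : f = MM f p L ∅ := by
    funext u
    unfold MM
    exact ((max'_congr' (by rw [Finset.filter_empty, Finset.image_empty]; rfl) _
      (Finset.singleton_nonempty _)).trans (Finset.max'_singleton _)).symm
  conv_lhs => rw [hf]
  rw [fold_fill hbht l ∅ hr (by simp)]
  have hset : ((∅ : Finset V) ∪ l.toFinset) =
      Finset.univ.filter (fun w => persBHT f r L w < (ε : EReal)) := by
    ext w
    simp [hmem w]
  rw [hset]
  funext u
  unfold MM LPF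
  refine max'_congr' ?_ _ _
  congr 1
  rw [Finset.filter_filter]
  congr 1
  apply Finset.filter_congr
  intro w _
  simp [and_comm]
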